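/- If w is a strictly balanced word of length 2k (k ≥ 3) over {a,b} and there exists a word u of length k with u ∉ ScatFact_k(w) and u is not of the form b^i a^{k-i} or a^i b^{k-i} for some 1 ≤ i ≤ k-1, then |ScatFact_k(w)| < 2^k − 1. -/
import Mathlib


def wa : Bool := false
def wb : Bool := true

/-- The set of scattered factors (subsequences) of `w` of length exactly `k`. -/
def ScatFact (k : ℕ) (w : List Bool) : Finset (List Bool) :=
  (w.sublists.filter (fun u => u.length = k)).toFinset

lemma mem_scatfact {k : ℕ} {w u : List Bool} :
    u ∈ ScatFact k w ↔ u.Sublist w ∧ u.length = k := by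
  simp [ScatFact, List.mem_filter]

/-- All binary words of a given length. -/
def allW : ℕ → Finset (List Bool)
  | 0 => {[]}
  | n + 1 => (allW n).image (false :: ·) ∪ (allW n).image (true :: ·)

lemma mem_allW : ∀ (n : ℕ) (v : List Bool), v ∈ allW n ↔ v.length = n := by
  intro n
  induction n with
  | zero => intro v; simp [allW, List.length_eq_zero_iff]
  | succ n ih =>
    intro v
    cases v with
    | nil => simp [allW]
    | cons c t =>
      cases c <;> simp [allW, ih]

lemma card_allW : ∀ n : ℕ, (allW n).card = 2 ^ n := by
  intro n
  induction n with
  | zero => simp [allW]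
  | succ n ih =>
    rw [allW, Finset.card_union_of_disjoint, Finset.card_image_of_injective _
        (fun a b h => by simpa using h), Finset.card_image_of_injective _
        (fun a b h => by simpa using h), ih, pow_succ]
    · ring
    · rw [Finset.disjoint_left]
      rintro x hx hy
      simp only [Finset.mem_image] at hx hy
      obtain ⟨a, -, rfl⟩ := hx
      obtain ⟨b, -, h⟩ := hy
      simp at h

lemma exists_first {c : Bool} : ∀ {y : List Bool}, c ∈ y →
    ∃ y₁ y₂, y = y₁ ++ c :: y₂ ∧ List.count c y₁ = 0 := by
  intro y
  induction y with
  | nil => intro h; simp at h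
  | cons d t ih =>
    intro h
    by_cases hdc : d = c
    · exact ⟨[], t, by simp [hdc], by simp⟩
    · have hct : c ∈ t := by
        rcases List.mem_cons.mp h with h1 | h1
        · exact absurd h1.symm hdc
        · exact h1
      obtain ⟨y₁, y₂, rfl, hc⟩ := ih hct
      exact ⟨d :: y₁, y₂, by simp, by
        simp [List.count_cons, hc, hdc]⟩

lemma key_lemma (k : ℕ) (w : List Bool)
    (hfa : w.count false = k) (htr : w.count true = k)
    (hst : ∀ c : Bool, ∀ i : ℕ, 1 ≤ i → i ≤ k - 1 →
      (List.replicate i c ++ List.replicate (k - i) (!c)).Sublist w) :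
    ∀ v : List Bool, v.length ≤ k →
      ∃ x y : List Bool, w = x ++ y ∧ v.Sublist x ∧
        x.count false ≤ v.length ∧ x.count true ≤ v.length := by
  intro v
  induction v using List.reverseRecOn with
  | nil => intro _; exact ⟨[], w, rfl, List.nil_sublist _, by simp, by simp⟩
  | append_singleton v c ih =>
    intro hlen
    rw [List.length_append, List.length_singleton] at hlen
    obtain ⟨x, y, hw, hsub, hcf, hct⟩ := ih (by omega)
    have hcw : w.count c = k := by cases c <;> assumption
    have hcx : x.count c ≤ v.length := by cases c <;> assumption
    have hxy : w.count c = x.count c + y.count c := by rw [hw, List.count_append]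
    have hcy : 0 < y.count c := by omega
    obtain ⟨y₁, y₂, rfl, hy₁⟩ := exists_first (List.count_pos_iff.mp hcy)
    refine ⟨x ++ (y₁ ++ [c]), y₂, by simp [hw], ?_, ?_, ?_⟩
    · exact List.Sublist.append hsub (List.sublist_append_right y₁ [c])
    all_goals {
      have hccx : (x ++ (y₁ ++ [c])).count c = x.count c + 1 := by
        simp [List.count_append, hy₁]
      have hncx : (x ++ (y₁ ++ [c])).count (!c) = (x ++ y₁).count (!c) := by
        simp [List.count_append, List.count_singleton']
      have hbound : (x ++ y₁).count (!c) ≤ v.length + 1 := by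
        set i := x.count c + 1 with hi
        have hi1 : 1 ≤ i := by omega
        have hik : i ≤ v.length + 1 := by omega
        by_cases hik1 : i ≤ k - 1
        · have hsl := hst c i hi1 hik1
          obtain ⟨p, q, hpq, hp, hq⟩ := List.append_sublist_iff.mp hsl
          have hcp : i ≤ p.count c := by
            have := hp.count_le c
            simpa using this
          have hnq : k - i ≤ q.count (!c) := by
            have := hq.count_le (!c)
            simpa using this
          have hnw : w.count (!c) = k := by cases c <;> simpa using by assumption
          have hnp : p.count (!c) ≤ i := by
            have : w.count (!c) = p.count (!c) + q.count (!c) := by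
              rw [hpq, List.count_append]
            omega
          have hpre1 : (x ++ y₁) <+: w := ⟨c :: y₂, by simp [hw]⟩
          have hpre2 : p <+: w := ⟨q, hpq.symm⟩
          rcases List.prefix_or_prefix_of_prefix hpre1 hpre2 with hpp | hpp
          · calc (x ++ y₁).count (!c) ≤ p.count (!c) := hpp.sublist.count_le _
              _ ≤ i := hnp
              _ ≤ v.length + 1 := hik
          · exfalso
            have : p.count c ≤ (x ++ y₁).count c := hpp.sublist.count_le _
            have hxy₁ : (x ++ y₁).count c = x.count c := by
              simp [List.count_append, hy₁]
            omega
        · -- i = k, so v.length + 1 = k and the trivial bound works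
          have hik2 : i = k := by omega
          have hnw : w.count (!c) = k := by cases c <;> simpa using by assumption
          have hpre1 : (x ++ y₁) <+: w := ⟨c :: y₂, by simp [hw]⟩
          have := hpre1.sublist.count_le (!c)
          omega
      cases hc : c <;> simp_all <;> omega }

theorem scatfact_card_lt_of_missing (k : ℕ) (hk : 3 ≤ k) (w : List Bool)
    (hlen : w.length = 2 * k) (ha : w.count wa = k) (hb : w.count wb = k)
    (u : List Bool) (hu : u.length = k) (hmem : u ∉ ScatFact k w)
    (hform : ∀ i : ℕ, 1 ≤ i → i ≤ k - 1 →
      u ≠ List.replicate i wb ++ List.replicate (k - i) wa ∧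
      u ≠ List.replicate i wa ++ List.replicate (k - i) wb) :
    (ScatFact k w).card < 2 ^ k - 1 := by
  by_contra hcon
  push_neg at hcon
  have hfa : w.count false = k := ha
  have htr : w.count true = k := hb
  have husub : {u} ⊆ allW k := by
    intro x hx
    rw [Finset.mem_singleton] at hx
    rw [mem_allW]
    exact hx ▸ hu
  have hsub : ScatFact k w ⊆ allW k \ {u} := by
    intro x hx
    rw [Finset.mem_sdiff, Finset.mem_singleton, mem_allW]
    refine ⟨(mem_scatfact.mp hx).2, ?_⟩
    rintro rfl
    exact hmem hx
  have hcard : (allW k \ {u}).card = 2 ^ k - 1 := by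
    rw [Finset.card_sdiff_of_subset husub, card_allW, Finset.card_singleton]
  have heq : ScatFact k w = allW k \ {u} :=
    Finset.eq_of_subset_of_card_le hsub (by omega)
  have hst : ∀ c : Bool, ∀ i : ℕ, 1 ≤ i → i ≤ k - 1 →
      (List.replicate i c ++ List.replicate (k - i) (!c)).Sublist w := by
    intro c i hi1 hik
    have hlen' : (List.replicate i c ++ List.replicate (k - i) (!c)).length = k := by
      simp; omega
    have hne : List.replicate i c ++ List.replicate (k - i) (!c) ≠ u := by
      obtain ⟨h1, h2⟩ := hform i hi1 hik
      cases c
      · exact fun h => h2 h.symm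
      · exact fun h => h1 h.symm
    have : List.replicate i c ++ List.replicate (k - i) (!c) ∈ ScatFact k w := by
      rw [heq, Finset.mem_sdiff, Finset.mem_singleton, mem_allW]
      exact ⟨hlen', hne⟩
    exact (mem_scatfact.mp this).1
  obtain ⟨x, y, hw, hxsub, -, -⟩ := key_lemma k w hfa htr hst u (le_of_eq hu)
  have : u ∈ ScatFact k w := mem_scatfact.mpr
    ⟨hxsub.trans (hw ▸ List.sublist_append_left x y), hu⟩
  exact hmem this
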